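/- For every n ≥ 2 there exists an n×n matrix of vectors in ℚ^n whose every row and every column is a basis of ℚ^n, but which admits no transversal (one entry from each row and column) forming a linearly independent family. -/
import Mathlib

open Finset

-- rows of the witness matrix are linearly independent
lemma aux_li (n : ℕ) [NeZero n] (i : Fin n) :
    LinearIndependent ℚ (fun j : Fin n =>
      if i = j then (Pi.single 0 1 : Fin n → ℚ) else Pi.single i 1 - Pi.single j 1) := by
  rw [Fintype.linearIndependent_iff]
  intro g hg
  have hS : ∀ k : Fin n, g i * (if k = 0 then (1:ℚ) else 0)
      + ((if k = i then (1:ℚ) else 0) * ∑ j ∈ univ \ {i}, g j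
        - (if k ∈ univ \ {i} then g k else 0)) = 0 := by
    intro k
    have h1 := congrFun hg k
    simp only [Finset.sum_apply, Pi.smul_apply, Pi.zero_apply, smul_eq_mul] at h1
    rw [Finset.sum_eq_add_sum_sdiff_singleton_of_mem (Finset.mem_univ i)] at h1
    refine Eq.trans ?_ h1
    congr 1
    · simp [Pi.single_apply]
    · rw [Finset.mul_sum, ← Finset.sum_ite_eq' (univ \ {i}) k g, ← Finset.sum_sub_distrib]
      refine Finset.sum_congr rfl fun j hj => ?_
      have hij : i ≠ j := by simp at hj; exact fun h => hj h.symm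
      simp only [if_neg hij, Pi.sub_apply, Pi.single_apply]
      rcases eq_or_ne k j with rfl | hkj
      · simp [mul_sub, mul_comm]
      · simp [hkj, Ne.symm hkj, mul_sub, mul_comm]
  have hzero : ∀ k : Fin n, k ≠ i → k ≠ 0 → g k = 0 := by
    intro k hki hk0
    have := hS k
    simp [hki, hk0] at this
    exact this
  rcases eq_or_ne i 0 with rfl | hi0
  · have hC : ∑ j ∈ univ \ {(0:Fin n)}, g j = 0 :=
      Finset.sum_eq_zero fun j hj => hzero j (by simpa using hj) (by simpa using hj)
    have h0 := hS 0
    simp [hC] at h0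
    intro k
    rcases eq_or_ne k 0 with rfl | hk
    · exact h0
    · exact hzero k hk hk
  · have hC : ∑ j ∈ univ \ {i}, g j = g 0 := by
      refine Finset.sum_eq_single_of_mem 0 (by simp [Ne.symm hi0]) fun j hj hj0 => ?_
      exact hzero j (by simpa using hj) hj0
    have h0 := hS 0
    simp [hi0, Ne.symm hi0, hC] at h0
    have hi := hS i
    simp [hi0, hC] at hi
    -- h0 : g i - g 0 = 0  (or similar), hi : g 0 = 0 maybe
    intro k
    rcases eq_or_ne k i with rfl | hki
    · linarith
    rcases eq_or_ne k 0 with rfl | hk0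
    · linarith
    · exact hzero k hki hk0

theorem stmt_15 (n : ℕ) (hn : 2 ≤ n) :
    ∃ A : Fin n → Fin n → (Fin n → ℚ),
      (∀ i, LinearIndependent ℚ (A i) ∧ Submodule.span ℚ (Set.range (A i)) = ⊤) ∧
      (∀ j, LinearIndependent ℚ (fun i => A i j) ∧
        Submodule.span ℚ (Set.range (fun i => A i j)) = ⊤) ∧
      (∀ σ : Equiv.Perm (Fin n), ¬ LinearIndependent ℚ (fun i => A i (σ i))) := by
  haveI : NeZero n := ⟨by omega⟩
  refine ⟨fun i j => if i = j then (Pi.single 0 1 : Fin n → ℚ)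
    else Pi.single i 1 - Pi.single j 1, ?_, ?_, ?_⟩
  · intro i
    have hli := aux_li n i
    refine ⟨hli, hli.span_eq_top_of_card_eq_finrank (by simp)⟩
  · intro j
    have hli := aux_li n j
    have hcol : (fun i : Fin n => if i = j then (Pi.single 0 1 : Fin n → ℚ)
        else Pi.single i 1 - Pi.single j 1)
        = (fun i : Fin n => if i = j then (1 : ℚˣ) else -1) • (fun i : Fin n =>
          if j = i then (Pi.single 0 1 : Fin n → ℚ) else Pi.single j 1 - Pi.single i 1) := by
      funext i
      rcases eq_or_ne i j with rfl | hij
      · simp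
      · simp [hij, Ne.symm hij, Pi.smul_apply]
    have hli2 : LinearIndependent ℚ (fun i : Fin n => if i = j then (Pi.single 0 1 : Fin n → ℚ)
        else Pi.single i 1 - Pi.single j 1) := by
      rw [hcol]; exact hli.units_smul _
    exact ⟨hli2, hli2.span_eq_top_of_card_eq_finrank (by simp)⟩
  · intro σ hli
    by_cases hσ : ∀ i, σ i = i
    · have h01 : (0 : Fin n) ≠ (1 : Fin n) := by
        have : (1:ℕ) < n := by omega
        simp [Fin.ext_iff, Fin.val_one, Nat.mod_eq_of_lt this]
      exact h01 (hli.injective (by simp [hσ]))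
    · push_neg at hσ
      obtain ⟨i0, hi0⟩ := hσ
      rw [Fintype.linearIndependent_iff] at hli
      have key := hli (fun i => if i ∈ σ.support then (1:ℚ) else 0) ?_ i0
      · simp [Equiv.Perm.mem_support, hi0] at key
      · have hsum : ∑ i : Fin n, (if i ∈ σ.support then (1:ℚ) else 0) •
            (if i = σ i then (Pi.single 0 1 : Fin n → ℚ) else Pi.single i 1 - Pi.single (σ i) 1)
            = ∑ i ∈ σ.support, (Pi.single i 1 - Pi.single (σ i) (1:ℚ)) := by
          simp only [ite_smul, one_smul, zero_smul]
          rw [Finset.sum_ite_mem, Finset.univ_inter]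
          refine Finset.sum_congr rfl fun i hi => ?_
          rw [Equiv.Perm.mem_support] at hi
          rw [if_neg (fun h => hi h.symm)]
        rw [hsum, Finset.sum_sub_distrib, Equiv.Perm.sum_comp σ σ.support
          (fun i => Pi.single i (1:ℚ)) (fun a ha => Equiv.Perm.mem_support.2 ha), sub_self]
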